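/- The number of ascent sequences of length n avoiding the pattern 011 is 2^{n-1}, and these are precisely the sequences consisting of a strictly increasing ascent sequence arbitrarily interspersed with 0's. -/

import Mathlib

/-- Number of ascents (adjacent strict rises) in a list of naturals. -/
def ascList (l : List ℕ) : ℕ :=
  (l.zip l.tail).countP (fun p => decide (p.1 < p.2))

/-- `l` is an ascent sequence: nonempty, starts with 0, and each later letter is at most
one more than the number of ascents in the preceding prefix. -/
def IsAscSeq (l : List ℕ) : Prop :=
  l ≠ [] ∧ l.getD 0 0 = 0 ∧
    ∀ i, 0 < i → i < l.length → l.getD i 0 ≤ ascList (l.take i) + 1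

/-- A sequence contains the pattern 011. -/
def Contains011 (l : List ℕ) : Prop :=
  ∃ i j k, i < j ∧ j < k ∧ k < l.length ∧
    l.getD i 0 < l.getD j 0 ∧ l.getD j 0 = l.getD k 0

/-! ### Auxiliary definitions -/

/-- number of nonzero entries -/
def nzc (l : List ℕ) : ℕ := l.countP (fun x => decide (x ≠ 0))

/-- build a list from a boolean pattern and a running counter -/
def bld : List Bool → ℕ → List ℕ
  | [], _ => []
  | true :: b, c => (c + 1) :: bld b (c + 1)
  | false :: b, c => 0 :: bld b c

/-- structural predicate: every entry is zero or one more than the running counter. -/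
def Str : ℕ → List ℕ → Prop
  | _, [] => True
  | c, x :: t => (x = 0 ∧ Str c t) ∨ (x = c + 1 ∧ Str (c + 1) t)

/-! ### basic lemmas -/

lemma nzc_nil : nzc [] = 0 := rfl

lemma nzc_cons (x : ℕ) (t : List ℕ) :
    nzc (x :: t) = (if x ≠ 0 then 1 else 0) + nzc t := by
  by_cases h : x = 0 <;> simp [nzc, List.countP_cons, h, Nat.add_comm]

lemma ascList_nil : ascList [] = 0 := rfl

lemma ascList_single (x : ℕ) : ascList [x] = 0 := rfl

lemma ascList_cons_cons (x y : ℕ) (t : List ℕ) :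
    ascList (x :: y :: t) = (if x < y then 1 else 0) + ascList (y :: t) := by
  by_cases h : x < y <;> simp [ascList, List.countP_cons, h, Nat.add_comm]

lemma ascList_le_nzc (x : ℕ) (t : List ℕ) : ascList (x :: t) ≤ nzc t := by
  induction t generalizing x with
  | nil => simp [ascList_single]
  | cons y s ih =>
    rw [ascList_cons_cons, nzc_cons]
    have := ih y
    by_cases h : x < y
    · have hy : y ≠ 0 := by omega
      simp only [h, if_true, hy, ne_eq, not_false_eq_true]
      omega
    · simp only [h, if_false]
      split <;> omega

/-! ### lemmas about `Str` -/

lemma str_take {c : ℕ} {t : List ℕ} (h : Str c t) (j : ℕ) : Str c (t.take j) := by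
  induction t generalizing c j with
  | nil => simp [Str]
  | cons x s ih =>
    cases j with
    | zero => simp [Str]
    | succ j =>
      rcases h with ⟨rfl, h⟩ | ⟨rfl, h⟩
      · exact Or.inl ⟨rfl, ih h j⟩
      · exact Or.inr ⟨rfl, ih h j⟩

lemma ascList_cons_str {t : List ℕ} {c d : ℕ} (h : Str c t) (hd : d ≤ c) :
    ascList (d :: t) = nzc t := by
  induction t generalizing c d with
  | nil => simp [ascList_single, nzc_nil]
  | cons x s ih =>
    rw [ascList_cons_cons, nzc_cons]
    rcases h with ⟨rfl, h⟩ | ⟨rfl, h⟩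
    · rw [ih h (Nat.zero_le c)]; simp
    · rw [ih h (le_refl (c + 1))]
      have hlt : d < c + 1 := by omega
      have hne : c + 1 ≠ 0 := by omega
      rw [if_pos hlt, if_pos hne]

lemma str_getD_le {c : ℕ} {t : List ℕ} (h : Str c t) (j : ℕ) :
    t.getD j 0 ≤ c + nzc (t.take j) + 1 := by
  induction t generalizing c j with
  | nil => simp
  | cons x s ih =>
    cases j with
    | zero =>
      rcases h with ⟨rfl, _⟩ | ⟨rfl, _⟩ <;> simp
    | succ j =>
      rw [List.getD_cons_succ, List.take_succ_cons, nzc_cons]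
      rcases h with ⟨rfl, h⟩ | ⟨rfl, h⟩
      · have := ih h j
        rw [if_neg (by simp)]
        omega
      · have := ih h j
        rw [if_pos (by omega)]
        omega

lemma str_getD_pos {c : ℕ} {t : List ℕ} (h : Str c t) (j : ℕ) :
    t.getD j 0 = 0 ∨ c < t.getD j 0 := by
  induction t generalizing c j with
  | nil => simp
  | cons x s ih =>
    cases j with
    | zero =>
      rcases h with ⟨rfl, _⟩ | ⟨rfl, _⟩
      · left; rfl
      · right; rw [List.getD_cons_zero]; omega
    | succ j =>
      rw [List.getD_cons_succ]
      rcases h with ⟨rfl, h⟩ | ⟨rfl, h⟩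
      · exact ih h j
      · rcases ih h j with h' | h'
        · exact Or.inl h'
        · exact Or.inr (by omega)

lemma str_no_rep {c : ℕ} {t : List ℕ} (h : Str c t) {j k : ℕ} (hjk : j < k)
    (he : t.getD j 0 = t.getD k 0) : t.getD j 0 = 0 := by
  induction t generalizing c j k with
  | nil => simp
  | cons x s ih =>
    cases j with
    | zero =>
      obtain ⟨k', rfl⟩ : ∃ k', k = k' + 1 := ⟨k - 1, by omega⟩
      rw [List.getD_cons_zero] at he ⊢
      rw [List.getD_cons_succ] at he
      rcases h with ⟨rfl, h⟩ | ⟨rfl, h⟩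
      · rfl
      · rcases str_getD_pos h k' with h' | h' <;> omega
    | succ j =>
      obtain ⟨k', rfl⟩ : ∃ k', k = k' + 1 := ⟨k - 1, by omega⟩
      rw [List.getD_cons_succ] at he ⊢
      rcases h with ⟨rfl, h⟩ | ⟨rfl, h⟩
      · exact ih h (by omega) he
      · exact ih h (by omega) he

lemma str_filter {c : ℕ} {t : List ℕ} (h : Str c t) :
    t.filter (fun x => decide (x ≠ 0)) = List.range' (c + 1) (nzc t) := by
  induction t generalizing c with
  | nil => simp [nzc_nil]
  | cons x s ih =>
    rcases h with ⟨rfl, h⟩ | ⟨rfl, h⟩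
    · rw [List.filter_cons, if_neg (by simp), ih h, nzc_cons, if_neg (by simp), Nat.zero_add]
    · have hx : (c + 1 : ℕ) ≠ 0 := Nat.succ_ne_zero c
      rw [List.filter_cons, if_pos (by simpa using hx), ih h, nzc_cons, if_pos hx,
        Nat.add_comm 1, List.range'_succ]

lemma str_bld (b : List Bool) (c : ℕ) : Str c (bld b c) := by
  induction b generalizing c with
  | nil => trivial
  | cons x b ih =>
    cases x
    · exact Or.inl ⟨rfl, ih c⟩
    · exact Or.inr ⟨rfl, ih (c + 1)⟩

lemma bld_length (b : List Bool) (c : ℕ) : (bld b c).length = b.length := by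
  induction b generalizing c with
  | nil => rfl
  | cons x b ih => cases x <;> simp [bld, ih]

lemma bld_inj {b b' : List Bool} {c : ℕ} (h : bld b c = bld b' c) : b = b' := by
  induction b generalizing b' c with
  | nil =>
    cases b' with
    | nil => rfl
    | cons y b' => cases y <;> simp [bld] at h
  | cons x b ih =>
    cases b' with
    | nil => cases x <;> simp [bld] at h
    | cons y b' =>
      cases x <;> cases y <;> simp only [bld, List.cons.injEq] at h
      · rw [ih h.2]
      · exact absurd h.1 (by omega)
      · exact absurd h.1 (by omega)
      · rw [ih h.2]

lemma bld_of_prop {t : List ℕ} :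
    ∀ c : ℕ, (∀ i, i < t.length → t.getD i 0 ≠ 0 → t.getD i 0 = c + nzc (t.take i) + 1) →
      t = bld (t.map (fun x => decide (x ≠ 0))) c := by
  induction t with
  | nil => intro c _; rfl
  | cons x s ih =>
    intro c hp
    by_cases hx : x = 0
    · subst hx
      have hmap : ((0 : ℕ) :: s).map (fun x => decide (x ≠ 0))
          = false :: s.map (fun x => decide (x ≠ 0)) := by simp
      rw [hmap]
      show (0 : ℕ) :: s = 0 :: bld _ c
      congr 1
      apply ih c
      intro i hi hne
      have := hp (i + 1) (by simpa using Nat.succ_lt_succ hi) (by simpa using hne)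
      rw [List.getD_cons_succ] at this
      rw [this, List.take_succ_cons, nzc_cons, if_neg (by simp)]
      omega
    · have hx0 := hp 0 (by simp) (by simpa using hx)
      rw [List.getD_cons_zero, List.take_zero, nzc_nil] at hx0
      have hx0' : x = c + 1 := by omega
      subst hx0'
      have hmap : ((c + 1 : ℕ) :: s).map (fun x => decide (x ≠ 0))
          = true :: s.map (fun x => decide (x ≠ 0)) := by simp
      rw [hmap]
      show (c + 1 : ℕ) :: s = (c + 1) :: bld _ (c + 1)
      congr 1
      apply ih (c + 1)
      intro i hi hne
      have := hp (i + 1) (by simpa using Nat.succ_lt_succ hi) (by simpa using hne)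
      rw [List.getD_cons_succ] at this
      rw [this, List.take_succ_cons, nzc_cons, if_pos hx]
      omega

/-! ### forward direction: built lists are good ascent sequences -/

lemma isAscSeq_of_str {t : List ℕ} (h : Str 0 t) : IsAscSeq (0 :: t) := by
  refine ⟨by simp, by simp, ?_⟩
  intro i hi hlen
  obtain ⟨j, rfl⟩ : ∃ j, i = j + 1 := ⟨i - 1, by omega⟩
  rw [List.getD_cons_succ, List.take_succ_cons]
  rw [ascList_cons_str (str_take h j) (Nat.zero_le 0)]
  simpa using str_getD_le h j

lemma not_contains011_of_str {t : List ℕ} (h : Str 0 t) : ¬ Contains011 (0 :: t) := by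
  rintro ⟨i, j, k, hij, hjk, hk, hlt, heq⟩
  obtain ⟨j', rfl⟩ : ∃ j', j = j' + 1 := ⟨j - 1, by omega⟩
  obtain ⟨k', rfl⟩ : ∃ k', k = k' + 1 := ⟨k - 1, by omega⟩
  rw [List.getD_cons_succ] at hlt heq
  rw [List.getD_cons_succ] at heq
  have := str_no_rep h (j := j') (k := k') (by omega) heq
  omega

/-! ### reverse direction -/

lemma mem_take_exists {l : List ℕ} {v : ℕ} {i : ℕ} (h : v ∈ l.take i) :
    ∃ p, p < i ∧ p < l.length ∧ l.getD p 0 = v := by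
  obtain ⟨p, hp, he⟩ := List.mem_iff_getElem.mp h
  rw [List.length_take] at hp
  refine ⟨p, by omega, by omega, ?_⟩
  rw [List.getD_eq_getElem _ _ (by omega : p < l.length)]
  rw [List.getElem_take] at he
  exact he

/-- auxiliary -/
lemma nzc_append (a b : List ℕ) : nzc (a ++ b) = nzc a + nzc b := by
  simp [nzc, List.countP_append]

/-- key step: an avoiding ascent sequence `0 :: t` forces each nonzero value. -/
lemma key_claim {t : List ℕ} (h1 : IsAscSeq (0 :: t)) (h2 : ¬ Contains011 (0 :: t)) :
    ∀ i, i ≤ t.length →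
      (t.take i).filter (fun x => decide (x ≠ 0)) = List.range' 1 (nzc (t.take i)) ∧
      (i < t.length → t.getD i 0 ≠ 0 → t.getD i 0 = nzc (t.take i) + 1) := by
  obtain ⟨-, -, hb0⟩ := h1
  have hb : ∀ i, i < t.length → t.getD i 0 ≤ nzc (t.take i) + 1 := by
    intro i hi
    have h := hb0 (i + 1) (Nat.succ_pos i) (by simpa using Nat.succ_lt_succ hi)
    rw [List.getD_cons_succ, List.take_succ_cons] at h
    have h2' := ascList_le_nzc 0 (t.take i)
    omega
  have hkey : ∀ i, i < t.length → t.getD i 0 ≠ 0 →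
      (t.take i).filter (fun x => decide (x ≠ 0)) = List.range' 1 (nzc (t.take i)) →
      t.getD i 0 = nzc (t.take i) + 1 := by
    intro i hi hv hA
    by_contra hcon
    have hvle := hb i hi
    have hmem : t.getD i 0 ∈ List.range' 1 (nzc (t.take i)) := by
      rw [List.mem_range'_1]; omega
    rw [← hA] at hmem
    obtain ⟨p, hp1, hp2, hp3⟩ := mem_take_exists (List.mem_of_mem_filter hmem)
    refine h2 ⟨0, p + 1, i + 1, by omega, by omega, by simpa using Nat.succ_lt_succ hi, ?_, ?_⟩
    · rw [List.getD_cons_zero, List.getD_cons_succ, hp3]; omega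
    · rw [List.getD_cons_succ, List.getD_cons_succ, hp3]
  intro i
  induction i with
  | zero =>
    intro _
    refine ⟨by simp [nzc_nil], ?_⟩
    intro h hv
    exact hkey 0 h hv (by simp [nzc_nil])
  | succ i ih =>
    intro hle
    have hi : i < t.length := by omega
    obtain ⟨hA, -⟩ := ih (le_of_lt hi)
    have ht : t.take (i + 1) = t.take i ++ [t.getD i 0] := by
      rw [List.take_succ, List.getElem?_eq_getElem hi, List.getD_eq_getElem t 0 hi]
      rfl
    by_cases hv : t.getD i 0 = 0
    · have hA' : (t.take (i + 1)).filter (fun x => decide (x ≠ 0))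
          = List.range' 1 (nzc (t.take (i + 1))) := by
        rw [ht, hv, List.filter_append, nzc_append, hA]
        have e1 : List.filter (fun x => decide (x ≠ 0)) [(0 : ℕ)] = [] := by simp
        have e2 : nzc [(0 : ℕ)] = 0 := by simp [nzc]
        rw [e1, e2, List.append_nil, Nat.add_zero]
      exact ⟨hA', fun hlen hv' => hkey (i + 1) hlen hv' hA'⟩
    · have hval : t.getD i 0 = nzc (t.take i) + 1 := hkey i hi hv hA
      have hA' : (t.take (i + 1)).filter (fun x => decide (x ≠ 0))
          = List.range' 1 (nzc (t.take (i + 1))) := by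
        rw [ht, List.filter_append, nzc_append, hA]
        have e1 : List.filter (fun x => decide (x ≠ 0)) [t.getD i 0] = [t.getD i 0] := by
          rw [List.filter_cons, if_pos (by rw [decide_eq_true_eq]; exact hv), List.filter_nil]
        have e2 : nzc [t.getD i 0] = 1 := by
          rw [nzc_cons, nzc_nil, if_pos hv]
        rw [e1, e2, hval, List.range'_1_concat, Nat.add_comm 1 (nzc (t.take i))]
      exact ⟨hA', fun hlen hv' => hkey (i + 1) hlen hv' hA'⟩

lemma reverse_dir {l : List ℕ} (h1 : IsAscSeq l) (h2 : ¬ Contains011 l) :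
    ∃ t : List ℕ, l = 0 :: t ∧ t = bld (t.map (fun x => decide (x ≠ 0))) 0 := by
  have hne := h1.1
  have h0 := h1.2.1
  obtain ⟨a, t, rfl⟩ : ∃ a t, l = a :: t := by
    cases l with
    | nil => exact absurd rfl hne
    | cons a t => exact ⟨a, t, rfl⟩
  rw [List.getD_cons_zero] at h0
  subst h0
  have hp := key_claim h1 h2
  refine ⟨t, rfl, ?_⟩
  apply bld_of_prop 0
  intro i hi hv
  rw [Nat.zero_add]
  exact (hp i (le_of_lt hi)).2 hi hv

lemma nodup_no011 {l : List ℕ} (hf : (l.filter (fun x => decide (x ≠ 0))).Nodup) :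
    ¬ Contains011 l := by
  rintro ⟨i, j, k, hij, hjk, hk, hlt, heq⟩
  have hv : l.getD j 0 ≠ 0 := by omega
  have hjlen : j < l.length := by omega
  have h1 : l.getD j 0 ∈ l.take k := by
    have hlen : j < (l.take k).length := by rw [List.length_take]; omega
    have e : (l.take k)[j]'hlen = l.getD j 0 := by
      rw [List.getElem_take]
      exact (List.getD_eq_getElem l 0 hjlen).symm
    exact e ▸ List.getElem_mem hlen
  have h2 : l.getD j 0 ∈ l.drop k := by
    have hlen : 0 < (l.drop k).length := by rw [List.length_drop]; omega
    have e : (l.drop k)[0]'hlen = l.getD j 0 := by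
      rw [List.getElem_drop, heq]
      exact (List.getD_eq_getElem l 0 (by omega : k < l.length)).symm
    exact e ▸ List.getElem_mem hlen
  have hc : 2 ≤ l.count (l.getD j 0) := by
    have c1 : 0 < (l.take k).count (l.getD j 0) := List.count_pos_iff.mpr h1
    have c2 : 0 < (l.drop k).count (l.getD j 0) := List.count_pos_iff.mpr h2
    have hsplit := List.take_append_drop k l
    calc 2 ≤ (l.take k).count (l.getD j 0) + (l.drop k).count (l.getD j 0) := by omega
      _ = l.count (l.getD j 0) := by rw [← List.count_append, hsplit]
  have hcf : (l.filter (fun x => decide (x ≠ 0))).count (l.getD j 0) = l.count (l.getD j 0) :=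
    List.count_filter (by rw [decide_eq_true_eq]; exact hv)
  have := List.nodup_iff_count_le_one.mp hf (l.getD j 0)
  omega

/-- There are `2^(n-1)` ascent sequences of length `n` avoiding 011, and they are precisely
the strictly increasing ascent sequences `0,1,…,m` arbitrarily interspersed with 0's
(equivalently, the nonzero letters form `1,2,…,m` in order). -/
theorem stmt6 (n : ℕ) (hn : 1 ≤ n) :
    {l : List ℕ | l.length = n ∧ IsAscSeq l ∧ ¬ Contains011 l}.ncard = 2 ^ (n - 1) ∧
    (∀ l : List ℕ, IsAscSeq l →
      (¬ Contains011 l ↔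
        ∃ m, l.filter (fun x => decide (x ≠ 0)) = (List.range m).map (· + 1))) := by
  constructor
  · -- counting
    set f : (Fin (n - 1) → Bool) → List ℕ := fun g => 0 :: bld (List.ofFn g) 0 with hf
    have hinj : Function.Injective f := by
      intro g g' h
      have h' : bld (List.ofFn g) 0 = bld (List.ofFn g') 0 := by
        rw [hf] at h; injection h
      exact List.ofFn_injective (bld_inj h')
    have hset : {l : List ℕ | l.length = n ∧ IsAscSeq l ∧ ¬ Contains011 l} = Set.range f := by
      ext l
      simp only [Set.mem_setOf_eq, Set.mem_range]
      constructor
      · rintro ⟨hlen, h1, h2⟩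
        obtain ⟨t, rfl, hbld⟩ := reverse_dir h1 h2
        set b := t.map (fun x => decide (x ≠ 0)) with hbdef
        have htlen : t.length = n - 1 := by
          simp only [List.length_cons] at hlen; omega
        have hblen : b.length = n - 1 := by simp [hbdef, htlen]
        refine ⟨fun i => b.getD (i : ℕ) false, ?_⟩
        have hofn : List.ofFn (fun i : Fin (n - 1) => b.getD (i : ℕ) false) = b := by
          apply List.ext_getElem
          · simp [hblen]
          · intro i hil hib
            rw [List.getElem_ofFn]
            exact List.getD_eq_getElem b false hib
        rw [hf]
        show (0 : ℕ) :: bld _ 0 = 0 :: t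
        rw [hofn, ← hbld]
      · rintro ⟨g, rfl⟩
        have hstr := str_bld (List.ofFn g) 0
        refine ⟨?_, isAscSeq_of_str hstr, not_contains011_of_str hstr⟩
        show ((0 : ℕ) :: bld (List.ofFn g) 0).length = n
        rw [List.length_cons, bld_length, List.length_ofFn]
        omega
    rw [hset, ← Set.image_univ, Set.ncard_image_of_injective _ hinj, Set.ncard_univ,
      Nat.card_eq_fintype_card]
    simp
  · intro l h1
    constructor
    · intro h2
      obtain ⟨t, rfl, hbld⟩ := reverse_dir h1 h2
      have hstr : Str 0 t := by rw [hbld]; exact str_bld _ 0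
      refine ⟨nzc t, ?_⟩
      rw [List.filter_cons, if_neg (by simp), str_filter hstr, Nat.zero_add,
        List.range'_eq_map_range]
      exact List.map_congr_left (fun x _ => Nat.add_comm 1 x)
    · rintro ⟨m, hm⟩
      apply nodup_no011
      rw [hm]
      refine List.Nodup.map ?_ (List.nodup_range (n := m))
      intro a b h
      exact Nat.succ_injective h
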